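/- Every core-free subgroup L of the central product T ∘ T of two binary tetrahedral groups has index at least 24; hence μ(T ∘ T) = 24. -/

import Mathlib

/-- The minimal faithful permutation degree of a group `G`: the least `n`
such that `G` embeds into `Sym(n)`. -/
noncomputable def minFaithfulDegree (G : Type*) [Group G] : ℕ :=
  sInf {n : ℕ | ∃ f : G →* Equiv.Perm (Fin n), Function.Injective f}

instance Subgroup.center.commGroup (G : Type*) [Group G] : CommGroup (Subgroup.center G) :=
  { (Subgroup.center G).toGroup with mul_comm := fun a b => mul_comm' a b }

/-- The anti-diagonal copy `{(z, z⁻¹) | z ∈ Z(G)}` of the center inside `G × G`. -/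
noncomputable def centerAntidiag (G : Type*) [Group G] : Subgroup (G × G) :=
  ((Subgroup.center G).subtype.prod ((Subgroup.center G).subtype.comp invMonoidHom)).range

instance centerAntidiag_normal (G : Type*) [Group G] : (centerAntidiag G).Normal := by
  constructor
  rintro p ⟨⟨z, hz⟩, hp⟩ ⟨g, h⟩
  refine ⟨⟨z, hz⟩, ?_⟩
  have hp' : p = (z, z⁻¹) := hp.symm
  subst hp'
  have h1 : g * z * g⁻¹ = z := by
    rw [Subgroup.mem_center_iff.mp hz g]; group
  have h2 : h * z⁻¹ * h⁻¹ = z⁻¹ := by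
    rw [Subgroup.mem_center_iff.mp (Subgroup.inv_mem _ hz) h]; group
  show ((z : G), (z⁻¹ : G)) = (g, h) * (z, z⁻¹) * (g, h)⁻¹
  simp only [Prod.mk_mul_mk, Prod.inv_mk]
  exact Prod.ext h1.symm h2.symm

/-- The central product `G ∘ G`, the quotient of `G × G` by the (anti)diagonal
copy of the center. -/
noncomputable def centralProduct (G : Type*) [Group G] : Type _ :=
  (G × G) ⧸ centerAntidiag G

noncomputable instance (G : Type*) [Group G] : Group (centralProduct G) :=
  QuotientGroup.Quotient.group _

/-- The binary tetrahedral group, realized as `SL(2, F₃)`. -/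
abbrev binaryTetrahedral : Type := Matrix.SpecialLinearGroup (Fin 2) (ZMod 3)

/-! ### Auxiliary development -/

namespace CPAux

abbrev T : Type := binaryTetrahedral

instance instDecEqT : DecidableEq T :=
  fun a b => @decidable_of_iff _ (∀ i j, a.1 i j = b.1 i j) (Matrix.SpecialLinearGroup.ext_iff a b).symm
    (@Fintype.decidableForallFintype _ _ (fun i => @Fintype.decidableForallFintype _ _ (fun j => ZMod.decidableEq 3 _ _) _) _)

def z0 : T := -1

abbrev A : Type := T ⧸ Subgroup.center T

instance (priority := 2000) instDecRelA :
    DecidableRel ((QuotientGroup.leftRel (Subgroup.center T)).r) :=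
  fun _ _ => decidable_of_iff _ (QuotientGroup.leftRel_apply (s := Subgroup.center T)).symm

instance (priority := 2000) instDecEqA : DecidableEq A :=
  @Quotient.decidableEq _ _ instDecRelA

instance (priority := 2000) instFintypeA : Fintype A := @Quotient.fintype _ _ _ instDecRelA

set_option maxRecDepth 4000000

/-! #### Facts established by `decide` -/

lemma cardT_fin : Fintype.card T = 24 := by decide

lemma invT : ∀ x : T, x * x = 1 → x = 1 ∨ x = z0 := by decide

lemma centerT : ∀ x : T, x ∈ Subgroup.center T ↔ (x = 1 ∨ x = z0) := by decide

lemma z0_ne_one : z0 ≠ 1 := by decide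

lemma z0_mul_z0 : z0 * z0 = 1 := by decide

lemma cardA_fin : Fintype.card A = 12 := by decide

lemma ordA : ∀ x : A, x ^ 2 = 1 ∨ x ^ 3 = 1 := by decide

lemma invCommA : ∀ x y : A, x * x = 1 → y * y = 1 → x * y = y * x := by decide

lemma noNormC3A : ∀ c : A, c * c * c = 1 → c ≠ 1 →
    ∃ g : A, ¬(g * c * g⁻¹ = 1 ∨ g * c * g⁻¹ = c ∨ g * c * g⁻¹ = c * c) := by decide

lemma noNormC3T : ∀ c : T, c * c * c = 1 → c ≠ 1 →
    ∃ g : T, ¬(g * c * g⁻¹ = 1 ∨ g * c * g⁻¹ = c ∨ g * c * g⁻¹ = c * c) := by decide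

/-! #### Generic counting lemmas -/

lemma card_comp_decomp {Γ Δ : Type*} [Group Γ] [Group Δ] (f : Γ →* Δ) :
    Nat.card Γ = Nat.card f.range * Nat.card f.ker := by
  rw [Subgroup.card_eq_card_quotient_mul_card_subgroup f.ker,
    Nat.card_congr (QuotientGroup.quotientKerEquivRange f).toEquiv]

/-- In a group with no "normal `C₃`" (witnessed elementwise), there is no normal subgroup
of order 3. -/
lemma no_normal_three {Γ : Type*} [Group Γ]
    (hno : ∀ c : Γ, c * c * c = 1 → c ≠ 1 →
      ∃ g : Γ, ¬(g * c * g⁻¹ = 1 ∨ g * c * g⁻¹ = c ∨ g * c * g⁻¹ = c * c))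
    (S : Subgroup Γ) (hS : S.Normal) (h3 : Nat.card S = 3) : False := by
  have hfin : Finite S := Nat.finite_of_card_ne_zero (by rw [h3]; norm_num)
  have hex : ∃ c ∈ S, c ≠ 1 := by
    by_contra h
    push_neg at h
    have : S = ⊥ := (Subgroup.eq_bot_iff_forall S).mpr h
    rw [this, Subgroup.card_bot] at h3
    norm_num at h3
  obtain ⟨c, hcS, hc1⟩ := hex
  have hc3 : c * c * c = 1 := by
    have h := pow_card_eq_one' (G := S) (x := ⟨c, hcS⟩)
    rw [h3] at h
    have h' : ((⟨c, hcS⟩ : S) : Γ) ^ 3 = 1 := by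
      rw [← SubgroupClass.coe_pow, h]; rfl
    rwa [pow_succ, pow_two] at h'
  have hcc1 : c * c ≠ 1 := by
    intro h
    apply hc1
    have : c * (c * c) = c * 1 := by rw [h]
    rw [mul_one, ← mul_assoc] at this
    rw [← hc3, this]
  have hccc : c * c ≠ c := fun h => hc1 (mul_right_cancel (h.trans (one_mul c).symm))
  have hsub : ({1, c, c * c} : Set Γ) ⊆ (S : Set Γ) := by
    rintro x (rfl | rfl | rfl)
    · exact S.one_mem
    · exact hcS
    · exact S.mul_mem hcS hcS
  have hSn : (S : Set Γ).ncard = 3 := by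
    rw [← Nat.card_coe_set_eq]
    exact h3
  have hn3 : ({1, c, c * c} : Set Γ).ncard = 3 := by
    rw [Set.ncard_insert_of_notMem (by simp [Ne.symm hc1, Ne.symm hcc1]), Set.ncard_pair hccc.symm]
  have heq : ({1, c, c * c} : Set Γ) = (S : Set Γ) :=
    Set.eq_of_subset_of_ncard_le hsub (by rw [hSn, hn3]) (S : Set Γ).toFinite
  obtain ⟨g, hg⟩ := hno c hc3 hc1
  have : g * c * g⁻¹ ∈ (S : Set Γ) := hS.conj_mem c hcS g
  rw [← heq] at this
  exact hg this

/-! #### Subgroups of `T` avoiding the central involution -/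

lemma card_one_or_three (S : Subgroup T) (hz : z0 ∉ S) :
    Nat.card S = 1 ∨ Nat.card S = 3 := by
  have hd : Nat.card S ∣ 24 := by
    have h24 : Nat.card T = 24 := by rw [Nat.card_eq_fintype_card]; exact cardT_fin
    have := Subgroup.card_subgroup_dvd_card S
    rwa [h24] at this
  have h2 : ¬ 2 ∣ Nat.card S := by
    intro h2
    letI : Fintype S := Fintype.ofFinite _
    rw [Nat.card_eq_fintype_card] at h2
    obtain ⟨x, hx⟩ := exists_prime_orderOf_dvd_card 2 h2
    have hx2 : (x : T) * (x : T) = 1 := by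
      have := pow_orderOf_eq_one x
      rw [hx] at this
      have h' : ((x : T)) ^ 2 = 1 := by rw [← SubgroupClass.coe_pow, this]; rfl
      rwa [pow_two] at h'
    have hx1 : (x : T) ≠ 1 := by
      intro h
      have : x = 1 := Subtype.ext h
      rw [this, orderOf_one] at hx
      norm_num at hx
    rcases invT _ hx2 with h | h
    · exact hx1 h
    · exact hz (h ▸ x.2)
  have hcop : Nat.Coprime (Nat.card S) 8 := by
    have : Nat.Coprime 2 (Nat.card S) := (Nat.Prime.coprime_iff_not_dvd Nat.prime_two).mpr h2
    have : Nat.Coprime (Nat.card S) 2 := this.symm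
    have h8 : (8 : ℕ) = 2 ^ 3 := by norm_num
    rw [h8]
    exact this.pow_right 3
  have h3 : Nat.card S ∣ 3 := by
    have h24 : (24 : ℕ) = 3 * 8 := by norm_num
    rw [h24] at hd
    exact (Nat.Coprime.dvd_of_dvd_mul_right hcop hd)
  rcases (Nat.Prime.eq_one_or_self_of_dvd Nat.prime_three _ h3) with h | h
  · exact Or.inl h
  · exact Or.inr h

/-! #### No subgroup of order 6 in `A` -/

lemma klein_dvd (H : Subgroup A) (u v : A) (hu : u * u = 1) (hv : v * v = 1)
    (hu1 : u ≠ 1) (hv1 : v ≠ 1) (hne : u ≠ v) (hmu : u ∈ H) (hmv : v ∈ H) :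
    4 ∣ Nat.card H := by
  have hcm : u * v = v * u := invCommA u v hu hv
  have e1 : u * (u * v) = v := by rw [← mul_assoc, hu, one_mul]
  have e2 : v * (u * v) = u := by
    rw [← mul_assoc, ← hcm, mul_assoc, hv, mul_one]
  have e3 : (u * v) * u = v := by
    rw [mul_assoc, ← hcm, ← mul_assoc, hu, one_mul]
  have e4 : (u * v) * v = u := by rw [mul_assoc, hv, mul_one]
  have e5 : (u * v) * (u * v) = 1 := by
    rw [mul_assoc, e2]; exact hu
  have iu : u⁻¹ = u := inv_eq_of_mul_eq_one_right hu
  have iv : v⁻¹ = v := inv_eq_of_mul_eq_one_right hv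
  have iuv : (u * v)⁻¹ = u * v := inv_eq_of_mul_eq_one_right e5
  have nuv1 : u * v ≠ 1 := by
    intro h
    apply hne
    have : u = v⁻¹ := eq_inv_of_mul_eq_one_left h
    rwa [iv] at this
  have nu_uv : u ≠ u * v := by
    intro h
    exact hv1 (left_eq_mul.mp h)
  have nv_uv : v ≠ u * v := by
    intro h
    exact hu1 (right_eq_mul.mp h)
  let K : Subgroup A :=
    { carrier := {1, u, v, u * v}
      one_mem' := Or.inl rfl
      mul_mem' := by
        intro a b ha hb
        simp only [Set.mem_insert_iff, Set.mem_singleton_iff] at ha hb ⊢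
        rcases ha with rfl | rfl | rfl | rfl <;> rcases hb with rfl | rfl | rfl | rfl <;>
          simp [hu, hv, e1, e2, e3, e4, e5, ← hcm]
      inv_mem' := by
        intro a ha
        simp only [Set.mem_insert_iff, Set.mem_singleton_iff] at ha ⊢
        rcases ha with rfl | rfl | rfl | rfl <;> simp [iu, iv, iuv] }
  have hKle : K ≤ H := by
    intro a ha
    rcases ha with rfl | rfl | rfl | rfl
    · exact H.one_mem
    · exact hmu
    · exact hmv
    · exact H.mul_mem hmu hmv
  have hK4 : Nat.card K = 4 := by
    have hset : (K : Set A) = {1, u, v, u * v} := rfl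
    have : Nat.card K = ({1, u, v, u * v} : Set A).ncard := by
      rw [← Nat.card_coe_set_eq, ← hset]; rfl
    rw [this]
    rw [Set.ncard_insert_of_notMem (by simp [Ne.symm hu1, Ne.symm hv1, Ne.symm nuv1]),
      Set.ncard_insert_of_notMem (by simp [hne, nu_uv]),
      Set.ncard_pair nv_uv]
  have := Subgroup.card_dvd_of_le hKle
  rwa [hK4] at this

lemma no_six (H : Subgroup A) : Nat.card H ≠ 6 := by
  intro h6
  letI : Fintype H := Fintype.ofFinite _
  have hc6 : Fintype.card H = 6 := by rw [← Nat.card_eq_fintype_card]; exact h6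
  obtain ⟨u, hu⟩ := exists_prime_orderOf_dvd_card (G := H) 2 (by rw [hc6]; norm_num)
  obtain ⟨c, hc⟩ := exists_prime_orderOf_dvd_card (G := H) 3 (by rw [hc6]; norm_num)
  set uA : A := (u : A) with huA
  set cA : A := (c : A) with hcA
  have hu2 : uA * uA = 1 := by
    have := pow_orderOf_eq_one u
    rw [hu] at this
    have h' : uA ^ 2 = 1 := by rw [huA, ← SubgroupClass.coe_pow, this]; rfl
    rwa [pow_two] at h'
  have hu1 : uA ≠ 1 := by
    intro h
    have : u = 1 := Subtype.ext h
    rw [this, orderOf_one] at hu; norm_num at hu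
  have hc3 : cA * cA * cA = 1 := by
    have := pow_orderOf_eq_one c
    rw [hc] at this
    have h' : cA ^ 3 = 1 := by rw [hcA, ← SubgroupClass.coe_pow, this]; rfl
    rwa [pow_succ, pow_two] at h'
  have hc1 : cA ≠ 1 := by
    intro h
    have : c = 1 := Subtype.ext h
    rw [this, orderOf_one] at hc; norm_num at hc
  have hcc1 : cA * cA ≠ 1 := by
    intro h
    apply hc1
    have h2 : cA * (cA * cA) = cA * 1 := by rw [h]
    rw [mul_one, ← mul_assoc] at h2
    rw [← hc3, h2]
  -- all involutions of H are equal to uA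
  have huniq : ∀ v : A, v ∈ H → v * v = 1 → v ≠ 1 → v = uA := by
    intro v hvH hv2 hv1
    by_contra hneq
    have := klein_dvd H uA v hu2 hv2 hu1 hv1 (Ne.symm hneq) u.2 hvH
    rw [h6] at this
    norm_num at this
  -- uA is central in H, in particular commutes with cA
  have hcomm : cA * uA = uA * cA := by
    have hconj : cA * uA * cA⁻¹ = uA := by
      apply huniq
      · exact H.mul_mem (H.mul_mem c.2 u.2) (H.inv_mem c.2)
      · have : (cA * uA * cA⁻¹) * (cA * uA * cA⁻¹) = cA * (uA * uA) * cA⁻¹ := by group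
        rw [this, hu2, mul_one]
        simp
      · intro h0
        apply hu1
        have : uA = cA⁻¹ * (cA * uA * cA⁻¹) * cA := by group
        rw [h0] at this
        simpa using this
    calc cA * uA = (cA * uA * cA⁻¹) * cA := by group
    _ = uA * cA := by rw [hconj]
  have hCom : Commute uA cA := hcomm.symm
  rcases ordA (uA * cA) with h | h
  · rw [hCom.mul_pow, pow_two, pow_two, hu2, one_mul, ← pow_two] at h
    rw [pow_two] at h
    exact hcc1 h
  · rw [hCom.mul_pow] at h
    have hu3 : uA ^ 3 = uA := by
      rw [pow_succ, pow_two, hu2, one_mul]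
    have hc3' : cA ^ 3 = 1 := by
      rw [pow_succ, pow_two]
      exact hc3
    rw [hu3, hc3', mul_one] at h
    exact hu1 h

/-! #### The central product and its projections -/

abbrev GG : Type := centralProduct binaryTetrahedral

noncomputable def q : (T × T) →* GG := QuotientGroup.mk' (centerAntidiag T)

noncomputable def z : GG := q (z0, 1)

lemma z0_inv : z0⁻¹ = z0 := inv_eq_of_mul_eq_one_right z0_mul_z0

lemma memD (p : T × T) : p ∈ centerAntidiag T ↔ p = 1 ∨ p = (z0, z0) := by
  constructor
  · rintro ⟨⟨c, hc⟩, rfl⟩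
    rcases (centerT c).1 hc with rfl | rfl
    · left
      show ((1 : T), (1 : T)⁻¹) = 1
      simp
    · right
      show ((z0 : T), z0⁻¹) = (z0, z0)
      rw [z0_inv]
  · rintro (rfl | rfl)
    · exact Subgroup.one_mem _
    · exact ⟨⟨z0, (centerT z0).2 (Or.inr rfl)⟩, by
        show ((z0 : T), z0⁻¹) = (z0, z0)
        rw [z0_inv]⟩

lemma q_one_iff (x : T × T) : q x = 1 ↔ x ∈ centerAntidiag T :=
  QuotientGroup.eq_one_iff x

lemma q_eq_iff (a b : T × T) : q a = q b ↔ a⁻¹ * b ∈ centerAntidiag T := by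
  rw [← q_one_iff, map_mul, map_inv, inv_mul_eq_one]

lemma q_surj : Function.Surjective q := QuotientGroup.mk'_surjective _

lemma z_ne_one : z ≠ 1 := by
  intro h
  rcases (memD _).1 ((q_one_iff _).1 h) with h' | h'
  · exact z0_ne_one (congrArg Prod.fst h')
  · exact z0_ne_one ((congrArg Prod.snd h').symm)

lemma q_inr_z0 : q (1, z0) = z := by
  rw [show z = q (z0, 1) from rfl, q_eq_iff]
  refine (memD _).2 (Or.inr ?_)
  show ((1 : T)⁻¹ * z0, z0⁻¹ * 1) = (z0, z0)
  rw [z0_inv]; simp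

noncomputable def mkA : T →* A := QuotientGroup.mk' (Subgroup.center T)

lemma mkA_one_iff (x : T) : mkA x = 1 ↔ x ∈ Subgroup.center T := by
  rw [← MonoidHom.mem_ker, mkA, QuotientGroup.ker_mk']

noncomputable def phi : (T × T) →* A × A :=
  (mkA.comp (MonoidHom.fst T T)).prod (mkA.comp (MonoidHom.snd T T))

lemma phi_apply (x : T × T) : phi x = (mkA x.1, mkA x.2) := rfl

lemma phi_ker : centerAntidiag T ≤ phi.ker := by
  intro p hp
  rcases (memD p).1 hp with rfl | rfl
  · exact map_one phi
  · show phi (z0, z0) = 1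
    rw [phi_apply]
    have : mkA z0 = 1 := (mkA_one_iff z0).2 ((centerT z0).2 (Or.inr rfl))
    rw [this]; rfl

noncomputable def pi' : GG →* A × A := QuotientGroup.lift _ phi phi_ker

lemma pi'_q (x : T × T) : pi' (q x) = phi x := rfl

noncomputable def rho1 : GG →* A := (MonoidHom.fst A A).comp pi'

noncomputable def rho2 : GG →* A := (MonoidHom.snd A A).comp pi'

noncomputable def j1 : T →* GG := q.comp (MonoidHom.inl T T)

noncomputable def j2 : T →* GG := q.comp (MonoidHom.inr T T)

lemma j1_apply (s : T) : j1 s = q (s, 1) := rfl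

lemma j2_apply (s : T) : j2 s = q (1, s) := rfl

lemma j1_z0 : j1 z0 = z := rfl

lemma j2_z0 : j2 z0 = z := q_inr_z0

lemma rho1_q (x : T × T) : rho1 (q x) = mkA x.1 := rfl

lemma rho2_q (x : T × T) : rho2 (q x) = mkA x.2 := rfl

lemma rho2_j1 (s : T) : rho2 (j1 s) = 1 := by
  rw [j1_apply, rho2_q]
  exact map_one mkA

lemma rho1_j2 (s : T) : rho1 (j2 s) = 1 := by
  rw [j2_apply, rho1_q]
  exact map_one mkA

lemma rho1_j1 (s : T) : rho1 (j1 s) = mkA s := rfl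

lemma rho2_j2 (s : T) : rho2 (j2 s) = mkA s := rfl

lemma j1_inj : Function.Injective j1 := by
  intro s t h
  rw [j1_apply, j1_apply, q_eq_iff] at h
  rcases (memD _).1 h with h' | h'
  · have : s⁻¹ * t = 1 := congrArg Prod.fst h'
    exact inv_mul_eq_one.mp this
  · exact absurd ((congrArg Prod.snd h').symm : z0 = (1 : T)⁻¹ * 1) (by simpa using z0_ne_one)

lemma j2_inj : Function.Injective j2 := by
  intro s t h
  rw [j2_apply, j2_apply, q_eq_iff] at h
  rcases (memD _).1 h with h' | h'
  · have : s⁻¹ * t = 1 := congrArg Prod.snd h'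
    exact inv_mul_eq_one.mp this
  · exfalso
    have h2 := congrArg Prod.fst h'
    simp at h2
    exact z0_ne_one h2.symm

lemma rho2_ker (g : GG) : rho2 g = 1 ↔ ∃ s, g = j1 s := by
  constructor
  · intro h
    obtain ⟨⟨a, b⟩, rfl⟩ := q_surj g
    rw [rho2_q] at h
    rcases (centerT b).1 ((mkA_one_iff b).1 h) with rfl | rfl
    · exact ⟨a, rfl⟩
    · refine ⟨a * z0, ?_⟩
      rw [j1_apply, q_eq_iff]
      refine (memD _).2 (Or.inr ?_)
      show ((a⁻¹ * (a * z0) : T), (z0⁻¹ * 1 : T)) = (z0, z0)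
      rw [z0_inv]; simp [mul_assoc]
  · rintro ⟨s, rfl⟩
    exact rho2_j1 s

lemma rho1_ker (g : GG) : rho1 g = 1 ↔ ∃ s, g = j2 s := by
  constructor
  · intro h
    obtain ⟨⟨a, b⟩, rfl⟩ := q_surj g
    rw [rho1_q] at h
    rcases (centerT a).1 ((mkA_one_iff a).1 h) with rfl | rfl
    · exact ⟨b, rfl⟩
    · refine ⟨z0 * b, ?_⟩
      rw [j2_apply, q_eq_iff]
      refine (memD _).2 (Or.inr ?_)
      show ((z0⁻¹ * 1 : T), (b⁻¹ * (z0 * b) : T)) = (z0, z0)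
      have hb : b * z0 = z0 * b := Subgroup.mem_center_iff.1 ((centerT z0).2 (Or.inr rfl)) b
      rw [z0_inv, ← hb, inv_mul_cancel_left, mul_one]
  · rintro ⟨s, rfl⟩
    exact rho1_j2 s

lemma pi'_one_iff (g : GG) : pi' g = 1 ↔ g = 1 ∨ g = z := by
  constructor
  · intro h
    obtain ⟨⟨a, b⟩, rfl⟩ := q_surj g
    rw [pi'_q, phi_apply, Prod.mk_eq_one] at h
    rcases (centerT a).1 ((mkA_one_iff a).1 h.1) with rfl | rfl <;>
      rcases (centerT b).1 ((mkA_one_iff b).1 h.2) with rfl | rfl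
    · left; exact map_one q
    · right; exact q_inr_z0
    · right; rfl
    · left
      exact (q_one_iff _).2 ((memD _).2 (Or.inr rfl))
  · rintro (rfl | rfl)
    · exact map_one pi'
    · show phi (z0, 1) = 1
      rw [phi_apply, Prod.mk_eq_one]
      exact ⟨(mkA_one_iff z0).2 ((centerT z0).2 (Or.inr rfl)), map_one mkA⟩

lemma z_comm (g : GG) : g * z = z * g := by
  obtain ⟨⟨a, b⟩, rfl⟩ := q_surj g
  show q (a, b) * q (z0, 1) = q (z0, 1) * q (a, b)
  rw [← map_mul, ← map_mul]
  congr 1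
  have hz0 : a * z0 = z0 * a := Subgroup.mem_center_iff.1 ((centerT z0).2 (Or.inr rfl)) a
  show (a * z0, b * 1) = (z0 * a, 1 * b)
  rw [hz0, mul_one, one_mul]

/-! #### Cardinalities -/

lemma cardA_nat : Nat.card A = 12 := by
  rw [Nat.card_eq_fintype_card]; exact cardA_fin

lemma cardT_nat : Nat.card T = 24 := by
  rw [Nat.card_eq_fintype_card]; exact cardT_fin

lemma cardGG : Nat.card GG = 288 := by
  have h : Nat.card (T × T) = Nat.card GG * Nat.card (centerAntidiag T) :=
    Subgroup.card_eq_card_quotient_mul_card_subgroup (centerAntidiag T)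
  have hTT : Nat.card (T × T) = 576 := by
    rw [Nat.card_prod, cardT_nat]
  have hset : ((centerAntidiag T : Subgroup (T × T)) : Set (T × T)) = {1, (z0, z0)} := by
    ext p
    simp only [SetLike.mem_coe, Set.mem_insert_iff, Set.mem_singleton_iff]
    exact memD p
  have hD2 : Nat.card (centerAntidiag T) = 2 := by
    have h1 : Nat.card (centerAntidiag T) = (({1, (z0, z0)} : Set (T × T))).ncard := by
      rw [← Nat.card_coe_set_eq, ← hset]; rfl
    rw [h1, Set.ncard_pair (by
      intro h'
      exact z0_ne_one ((congrArg Prod.fst h').symm))]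
  rw [hTT, hD2] at h
  omega

lemma card_ker_comp (r : GG →* A) (jm : T →* GG) (hinj : Function.Injective jm)
    (hrj : ∀ s, r (jm s) = 1) (hker : ∀ g, r g = 1 → ∃ s, g = jm s) (L : Subgroup GG) :
    Nat.card ((r.comp L.subtype).ker) = Nat.card (L.comap jm) := by
  refine (Nat.card_eq_of_bijective
    (fun s : (L.comap jm) => (⟨⟨jm s.1, s.2⟩, MonoidHom.mem_ker.mpr (hrj s.1)⟩ :
      ((r.comp L.subtype).ker))) ⟨?_, ?_⟩).symm
  · intro s t h
    have h2 := congrArg (fun x : ((r.comp L.subtype).ker) => ((x : L) : GG)) h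
    exact Subtype.ext (hinj h2)
  · rintro ⟨⟨g, hgL⟩, hk⟩
    have hg1 : r g = 1 := MonoidHom.mem_ker.mp hk
    obtain ⟨s, rfl⟩ := hker g hg1
    exact ⟨⟨s, hgL⟩, by apply Subtype.ext; apply Subtype.ext; rfl⟩

/-! #### Every subgroup avoiding `z` has order at most 12 -/

lemma key (L : Subgroup GG) (hzL : z ∉ L) : Nat.card L ≤ 12 := by
  classical
  set F1 : L →* A := rho1.comp L.subtype with hF1def
  set F2 : L →* A := rho2.comp L.subtype with hF2def
  have hdec2 : Nat.card L = Nat.card F2.range * Nat.card F2.ker := card_comp_decomp F2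
  have hdec1 : Nat.card L = Nat.card F1.range * Nat.card F1.ker := card_comp_decomp F1
  have hker2 : Nat.card F2.ker = Nat.card (L.comap j1) :=
    card_ker_comp rho2 j1 j1_inj rho2_j1 (fun g => (rho2_ker g).1) L
  have hker1 : Nat.card F1.ker = Nat.card (L.comap j2) :=
    card_ker_comp rho1 j2 j2_inj rho1_j2 (fun g => (rho1_ker g).1) L
  have hz1 : z0 ∉ L.comap j1 := fun h => hzL (j1_z0 ▸ h)
  have hz2 : z0 ∉ L.comap j2 := fun h => hzL (j2_z0 ▸ h)
  have ha2 := card_one_or_three _ hz1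
  have ha1 := card_one_or_three _ hz2
  have hb2 : Nat.card F2.range ∣ 12 := by
    have := Subgroup.card_subgroup_dvd_card F2.range
    rwa [cardA_nat] at this
  have hb1 : Nat.card F1.range ∣ 12 := by
    have := Subgroup.card_subgroup_dvd_card F1.range
    rwa [cardA_nat] at this
  rcases ha2 with h1 | h3
  · rw [hdec2, hker2, h1, mul_one]
    exact Nat.le_of_dvd (by norm_num) hb2
  · obtain ⟨b2, hb2eq⟩ : ∃ b, Nat.card F2.range = b := ⟨_, rfl⟩
    rw [hb2eq] at hdec2 hb2
    have hn : Nat.card L = b2 * 3 := by rw [hdec2, hker2, h3]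
    have hble : b2 ≤ 12 := Nat.le_of_dvd (by norm_num) hb2
    interval_cases b2
    · omega
    · omega
    · omega
    · omega
    · omega
    · norm_num at hb2
    · exact absurd hb2eq (no_six F2.range)
    · norm_num at hb2
    · norm_num at hb2
    · norm_num at hb2
    · norm_num at hb2
    · norm_num at hb2
    · -- b2 = 12 : Goursat case
      exfalso
      have hn36 : Nat.card L = 36 := by omega
      rcases ha1 with k1 | k3
      · have h36 : Nat.card F1.range = 36 := by
          rw [hdec1, hker1, k1, mul_one] at hn36
          exact hn36
        rw [h36] at hb1
        norm_num at hb1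
      · have hb1v : Nat.card F1.range = 12 := by
          have h' : Nat.card L = Nat.card F1.range * 3 := by rw [hdec1, hker1, k3]
          omega
        have htop : F1.range = ⊤ := by
          apply Subgroup.eq_top_of_card_eq
          rw [hb1v, cardA_nat]
        -- the image of `L.comap j1` in `A` is a normal subgroup of order 3
        have hmap_card : Nat.card ((L.comap j1).map mkA) = 3 := by
          have hbij : Function.Bijective
              (fun s : (L.comap j1) => (⟨mkA s.1, Subgroup.mem_map_of_mem mkA s.2⟩ :
                ((L.comap j1).map mkA))) := by
            constructor
            · intro s t h
              have h2 : mkA s.1 = mkA t.1 := congrArg (fun x : ((L.comap j1).map mkA) => (x : A)) h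
              have h4 : mkA ((s.1)⁻¹ * t.1) = 1 := by
                rw [map_mul, map_inv, h2, inv_mul_cancel]
              have h3' : (s.1)⁻¹ * t.1 ∈ Subgroup.center T := (mkA_one_iff _).1 h4
              rcases (centerT _).1 h3' with h' | h'
              · exact Subtype.ext (inv_mul_eq_one.mp h')
              · exfalso
                apply hzL
                have : j1 ((s.1)⁻¹ * t.1) ∈ L := by
                  rw [map_mul, map_inv]
                  exact L.mul_mem (L.inv_mem s.2) t.2
                rwa [h', j1_z0] at this
            · rintro ⟨x, hx⟩
              obtain ⟨s, hs, rfl⟩ := Subgroup.mem_map.1 hx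
              exact ⟨⟨s, hs⟩, by apply Subtype.ext; rfl⟩
          rw [← Nat.card_eq_of_bijective _ hbij, h3]
        have hnormal : ((L.comap j1).map mkA).Normal := by
          constructor
          intro n hn' g
          obtain ⟨s, hsSa, rfl⟩ := Subgroup.mem_map.1 hn'
          obtain ⟨y, hy⟩ := MonoidHom.mem_range.1 (show g ∈ F1.range by rw [htop]; trivial)
          have hy' : rho1 ((y : GG)) = g := hy
          have h1 : rho2 ((y : GG) * j1 s * (y : GG)⁻¹) = 1 := by
            rw [map_mul, map_mul, map_inv, rho2_j1, mul_one, mul_inv_cancel]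
          obtain ⟨t, ht⟩ := (rho2_ker _).1 h1
          have htSa : t ∈ L.comap j1 := by
            show j1 t ∈ L
            rw [← ht]
            exact L.mul_mem (L.mul_mem y.2 hsSa) (L.inv_mem y.2)
          refine Subgroup.mem_map.2 ⟨t, htSa, ?_⟩
          have h2 := congrArg rho1 ht
          rw [map_mul, map_mul, map_inv, rho1_j1, rho1_j1, hy'] at h2
          exact h2.symm
        exact no_normal_three noNormC3A _ hnormal hmap_card

/-! #### Nontrivial normal subgroups contain `z` -/

lemma normal_side (N : Subgroup GG) (hN : N.Normal) (hzN : z ∉ N)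
    (jm : T →* GG) (hjz : jm z0 = z)
    (s1 : T) (hs1 : jm s1 ∈ N) (hs11 : s1 ≠ 1) : False := by
  have hnorm : (N.comap jm).Normal := by
    constructor
    intro n hn g
    show jm (g * n * g⁻¹) ∈ N
    rw [map_mul, map_mul, map_inv]
    exact hN.conj_mem _ hn _
  have hz0 : z0 ∉ N.comap jm := fun h => hzN (hjz ▸ h)
  rcases card_one_or_three (N.comap jm) hz0 with h | h
  · have hbot : N.comap jm = ⊥ := Subgroup.card_eq_one.mp h
    have : s1 ∈ (⊥ : Subgroup T) := hbot ▸ (hs1 : s1 ∈ N.comap jm)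
    exact hs11 (Subgroup.mem_bot.mp this)
  · exact no_normal_three noNormC3T _ hnorm h

lemma normal_triv (N : Subgroup GG) (hN : N.Normal) (hzN : z ∉ N) : N = ⊥ := by
  by_contra hbot
  obtain ⟨x, hxN, hx1⟩ : ∃ x ∈ N, x ≠ 1 := by
    by_contra h
    push_neg at h
    exact hbot ((Subgroup.eq_bot_iff_forall N).mpr h)
  have hxz : x ≠ z := fun h => hzN (h ▸ hxN)
  have hnc : (∃ s : T, j1 s * x ≠ x * j1 s) ∨ (∃ t : T, j2 t * x ≠ x * j2 t) := by
    by_contra h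
    push_neg at h
    obtain ⟨h1, h2⟩ := h
    obtain ⟨⟨a, b⟩, rfl⟩ := q_surj x
    have ha : a ∈ Subgroup.center T := by
      rw [Subgroup.mem_center_iff]
      intro s
      have e1 : j1 s * q (a, b) = q (s * a, b) := by
        rw [j1_apply, ← map_mul, Prod.mk_mul_mk, one_mul]
      have e2 : q (a, b) * j1 s = q (a * s, b) := by
        rw [j1_apply, ← map_mul, Prod.mk_mul_mk, mul_one]
      have heq : q (s * a, b) = q (a * s, b) := e1.symm.trans ((h1 s).trans e2)
      rw [q_eq_iff] at heq
      rcases (memD _).1 heq with h' | h'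
      · exact inv_mul_eq_one.mp (congrArg Prod.fst h')
      · exfalso
        have hb' := congrArg Prod.snd h'
        simp at hb'
        exact z0_ne_one hb'.symm
    have hb : b ∈ Subgroup.center T := by
      rw [Subgroup.mem_center_iff]
      intro t
      have e1 : j2 t * q (a, b) = q (a, t * b) := by
        rw [j2_apply, ← map_mul, Prod.mk_mul_mk, one_mul]
      have e2 : q (a, b) * j2 t = q (a, b * t) := by
        rw [j2_apply, ← map_mul, Prod.mk_mul_mk, mul_one]
      have heq : q (a, t * b) = q (a, b * t) := e1.symm.trans ((h2 t).trans e2)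
      rw [q_eq_iff] at heq
      rcases (memD _).1 heq with h' | h'
      · exact inv_mul_eq_one.mp (congrArg Prod.snd h')
      · exfalso
        have ha' := congrArg Prod.fst h'
        simp at ha'
        exact z0_ne_one ha'.symm
    rcases (centerT a).1 ha with rfl | rfl <;> rcases (centerT b).1 hb with rfl | rfl
    · exact hx1 (map_one q)
    · exact hxz q_inr_z0
    · exact hxz rfl
    · exact hx1 ((q_one_iff _).2 ((memD _).2 (Or.inr rfl)))
  rcases hnc with ⟨s, hs⟩ | ⟨t, ht⟩
  · have hwN : j1 s * x * (j1 s)⁻¹ * x⁻¹ ∈ N :=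
      N.mul_mem (hN.conj_mem x hxN (j1 s)) (N.inv_mem hxN)
    have hw1 : j1 s * x * (j1 s)⁻¹ * x⁻¹ ≠ 1 := by
      intro h0
      exact hs (mul_inv_eq_iff_eq_mul.mp (mul_inv_eq_one.mp h0))
    have hwker : rho2 (j1 s * x * (j1 s)⁻¹ * x⁻¹) = 1 := by
      rw [map_mul, map_mul, map_mul, map_inv, map_inv, rho2_j1]
      group
    obtain ⟨s1, hws1⟩ := (rho2_ker _).1 hwker
    exact normal_side N hN hzN j1 j1_z0 s1 (hws1 ▸ hwN)
      (fun h => hw1 (by rw [hws1, h, map_one]))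
  · have hwN : j2 t * x * (j2 t)⁻¹ * x⁻¹ ∈ N :=
      N.mul_mem (hN.conj_mem x hxN (j2 t)) (N.inv_mem hxN)
    have hw1 : j2 t * x * (j2 t)⁻¹ * x⁻¹ ≠ 1 := by
      intro h0
      exact ht (mul_inv_eq_iff_eq_mul.mp (mul_inv_eq_one.mp h0))
    have hwker : rho1 (j2 t * x * (j2 t)⁻¹ * x⁻¹) = 1 := by
      rw [map_mul, map_mul, map_mul, map_inv, map_inv, rho1_j2]
      group
    obtain ⟨s1, hws1⟩ := (rho1_ker _).1 hwker
    exact normal_side N hN hzN j2 j2_z0 s1 (hws1 ▸ hwN)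
      (fun h => hw1 (by rw [hws1, h, map_one]))

/-! #### Index bound -/

lemma index_ge (L : Subgroup GG) (h12 : Nat.card L ≤ 12) : 24 ≤ L.index := by
  have h := Subgroup.card_mul_index L
  rw [cardGG] at h
  by_contra hlt
  push_neg at hlt
  have : Nat.card L * L.index ≤ 12 * 23 := Nat.mul_le_mul h12 (by omega)
  omega

/-! #### The faithful degree-24 action -/

noncomputable def d' : T →* GG := q.comp ((MonoidHom.id T).prod (MonoidHom.id T))

lemma d'_apply (t : T) : d' t = q (t, t) := rfl

lemma hzL0 : z ∉ d'.range := by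
  intro h
  obtain ⟨s, hs⟩ := MonoidHom.mem_range.1 h
  have hs' : q (s, s) = q (z0, 1) := hs
  rw [q_eq_iff] at hs'
  rcases (memD _).1 hs' with h' | h'
  · have h2 := congrArg Prod.snd h'
    simp only [Prod.mk_mul_mk, Prod.inv_mk] at h2 ⊢
    have hs1 : s = 1 := by simpa using h2
    have h1' := congrArg Prod.fst h'
    rw [hs1] at h1'
    simp at h1'
    exact z0_ne_one h1'
  · have h2 := congrArg Prod.snd h'
    have h1' := congrArg Prod.fst h'
    simp only [Prod.mk_mul_mk, Prod.inv_mk] at h1' h2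
    have hsz : s⁻¹ = z0 := by simpa using h2
    have : s⁻¹ * z0 = z0 := h1'
    rw [hsz] at this
    have : z0 = 1 := by
      have h3 := mul_right_cancel (this.trans (one_mul z0).symm)
      exact h3
    exact z0_ne_one this

lemma card_range_d' : Nat.card d'.range = 12 := by
  have hker : ((MonoidHom.ker d') : Set T) = {1, z0} := by
    ext x
    simp only [SetLike.mem_coe, MonoidHom.mem_ker, Set.mem_insert_iff, Set.mem_singleton_iff]
    constructor
    · intro h
      rcases (memD _).1 ((q_one_iff _).1 h) with h' | h'
      · left; exact congrArg Prod.fst h'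
      · right; exact congrArg Prod.fst h'
    · rintro (rfl | rfl)
      · exact map_one d'
      · exact (q_one_iff _).2 ((memD _).2 (Or.inr rfl))
  have hk2 : Nat.card (MonoidHom.ker d') = 2 := by
    have h1 : Nat.card (MonoidHom.ker d') = ({1, z0} : Set T).ncard := by
      rw [← Nat.card_coe_set_eq, ← hker]; rfl
    rw [h1, Set.ncard_pair (Ne.symm z0_ne_one)]
  have h := card_comp_decomp d'
  rw [cardT_nat, hk2] at h
  omega

lemma index_L0 : (d'.range).index = 24 := by
  have h := Subgroup.card_mul_index d'.range
  rw [cardGG, card_range_d'] at h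
  omega

noncomputable def permHomOfEquiv {α β : Type*} (e : α ≃ β) :
    Equiv.Perm α →* Equiv.Perm β where
  toFun := e.permCongr
  map_one' := by ext b; simp
  map_mul' := by
    intro σ τ
    ext b
    simp [Equiv.Perm.mul_apply]

lemma permHomOfEquiv_inj {α β : Type*} (e : α ≃ β) :
    Function.Injective (permHomOfEquiv e) := fun σ τ h => e.permCongr.injective h

lemma mem24 : 24 ∈ {n : ℕ | ∃ f : GG →* Equiv.Perm (Fin n), Function.Injective f} := by
  have core0 : (d'.range).normalCore = ⊥ :=
    normal_triv _ (Subgroup.normalCore_normal _)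
      (fun h => hzL0 (Subgroup.normalCore_le _ h))
  have hinj0 : Function.Injective (MulAction.toPermHom GG (GG ⧸ d'.range)) := by
    rw [← MonoidHom.ker_eq_bot_iff, ← Subgroup.normalCore_eq_ker]
    exact core0
  letI : Finite GG := Quotient.finite _
  letI : Finite (GG ⧸ d'.range) := Quotient.finite _
  letI : Fintype (GG ⧸ d'.range) := Fintype.ofFinite _
  have hq24 : Fintype.card (GG ⧸ d'.range) = 24 := by
    rw [← Nat.card_eq_fintype_card]
    exact index_L0
  have e := Fintype.equivFinOfCardEq hq24
  exact ⟨(permHomOfEquiv e).comp (MulAction.toPermHom GG (GG ⧸ d'.range)),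
    (permHomOfEquiv_inj e).comp hinj0⟩

lemma lower (n : ℕ) (h : ∃ f : GG →* Equiv.Perm (Fin n), Function.Injective f) :
    24 ≤ n := by
  obtain ⟨f, hf⟩ := h
  letI : MulAction GG (Fin n) := MulAction.compHom _ f
  have hfz : f z ≠ 1 := fun h0 => z_ne_one (hf (by rw [h0, map_one]))
  have hex : ∃ i, f z i ≠ i := by
    by_contra h0
    push_neg at h0
    exact hfz (Equiv.ext h0)
  obtain ⟨i, hi⟩ := hex
  have hzst : z ∉ MulAction.stabilizer GG i := by
    intro h0
    apply hi
    have h1 := MulAction.mem_stabilizer_iff.1 h0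
    rwa [MulAction.compHom_smul_def] at h1
  have h12 := key _ hzst
  have h24 := index_ge _ h12
  have horb : (MulAction.stabilizer GG i).index ≤ n := by
    rw [MulAction.index_stabilizer]
    have hle := Set.ncard_le_ncard (Set.subset_univ (MulAction.orbit GG i)) Set.finite_univ
    rwa [Set.ncard_univ, Nat.card_eq_fintype_card, Fintype.card_fin] at hle
  omega

end CPAux

/-- Every core-free subgroup of the central product `T ∘ T` of two binary tetrahedral
groups has index at least `24`; hence `μ(T ∘ T) = 24`. -/
theorem corefree_index_TT_and_mu :
    (∀ L : Subgroup (centralProduct binaryTetrahedral),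
        L.normalCore = ⊥ → 24 ≤ L.index) ∧
      minFaithfulDegree (centralProduct binaryTetrahedral) = 24 := by
  constructor
  · intro L hL
    have hzL : CPAux.z ∉ L := by
      intro hz'
      have hmem : CPAux.z ∈ L.normalCore := by
        intro b
        rw [CPAux.z_comm, mul_inv_cancel_right]
        exact hz'
      rw [hL] at hmem
      exact CPAux.z_ne_one (Subgroup.mem_bot.mp hmem)
    exact CPAux.index_ge L (CPAux.key L hzL)
  · have hdef : minFaithfulDegree (centralProduct binaryTetrahedral) =
      sInf {n : ℕ | ∃ f : CPAux.GG →* Equiv.Perm (Fin n), Function.Injective f} := rfl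
    rw [hdef]
    refine le_antisymm (Nat.sInf_le CPAux.mem24) (le_csInf ⟨24, CPAux.mem24⟩ ?_)
    intro n hn
    exact CPAux.lower n hn
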